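/- Let P be a plain metric logic program over alphabet 𝒜, let λ ≥ 1, and let M = ((⟨T_i,T_i⟩)_{0≤i<λ}, τ) be a total timed HT-trace of length λ. If M is a metric equilibrium model of P, then θ(M) is an equilibrium model of Π_λ(P) ∪ Δ_{λ,ν} ∪ Ψ_{λ,ν}(P), where ν = τ(λ−1). -/

import Mathlib

namespace MetricASP

/-- Metric intervals `[m..n)` with `n = none` standing for `ω`. -/
structure Interval : Type where
  m : ℕ
  n : Option ℕ

/-- `x ∈ [m..n)` iff `m ≤ x` and (`n = ω` or `x < n`). -/
def Interval.mem (I : Interval) (x : ℕ) : Prop :=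
  I.m ≤ x ∧ ∀ nn ∈ I.n, x < nn

/-- The interval `[0..ω)`. -/
def fullInterval : Interval := ⟨0, none⟩

/-- Metric formulas over an alphabet `α`. -/
inductive MF (α : Type) : Type
  | fls
  | atom (a : α)
  | conj (φ ψ : MF α)
  | disj (φ ψ : MF α)
  | impl (φ ψ : MF α)
  | init
  | next (I : Interval) (φ : MF α)
  | always (I : Interval) (φ : MF α)
  | evt (I : Interval) (φ : MF α)

def MF.neg {α : Type} (φ : MF α) : MF α := .impl φ .fls
def MF.top {α : Type} : MF α := MF.neg .fls
def MF.fin {α : Type} : MF α := MF.neg (.next fullInterval MF.top)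

/-- Timing function wrt `lam`. -/
def IsTiming (lam : ℕ) (τ : ℕ → ℕ) : Prop :=
  τ 0 = 0 ∧ ∀ k, k + 1 < lam → τ k < τ (k + 1)

/-- `H i ⊆ T i` for all relevant indices. -/
def IsTrace {α : Type} (lam : ℕ) (H T : ℕ → Set α) : Prop :=
  ∀ i, i < lam → H i ⊆ T i

/-- Satisfaction of a metric formula by a timed HT-trace of length `lam`. -/
def MSat {α : Type} (lam : ℕ) (τ : ℕ → ℕ) :
    (ℕ → Set α) → (ℕ → Set α) → ℕ → MF α → Prop
  | _, _, _, .fls => False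
  | H, _, k, .atom a => a ∈ H k
  | H, T, k, .conj φ ψ => MSat lam τ H T k φ ∧ MSat lam τ H T k ψ
  | H, T, k, .disj φ ψ => MSat lam τ H T k φ ∨ MSat lam τ H T k ψ
  | H, T, k, .impl φ ψ =>
      (MSat lam τ H T k φ → MSat lam τ H T k ψ) ∧
      (MSat lam τ T T k φ → MSat lam τ T T k ψ)
  | _, _, k, .init => k = 0
  | H, T, k, .next I φ =>
      k + 1 < lam ∧ MSat lam τ H T (k + 1) φ ∧ I.mem (τ (k + 1) - τ k)
  | H, T, k, .evt I φ =>
      ∃ i, k ≤ i ∧ i < lam ∧ I.mem (τ i - τ k) ∧ MSat lam τ H T i φ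
  | H, T, k, .always I φ =>
      ∀ i, k ≤ i → i < lam → I.mem (τ i - τ k) → MSat lam τ H T i φ

/-- MHT-model of a set of metric formulas. -/
def MHTModels {α : Type} (lam : ℕ) (τ : ℕ → ℕ) (H T : ℕ → Set α)
    (Γ : Set (MF α)) : Prop :=
  ∀ φ ∈ Γ, MSat lam τ H T 0 φ

/-- Metric equilibrium model (of the total trace given by `T` and `τ`). -/
def MetricEqModel {α : Type} (lam : ℕ) (τ : ℕ → ℕ) (T : ℕ → Set α)
    (Γ : Set (MF α)) : Prop :=
  MHTModels lam τ T T Γ ∧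
  ∀ H : ℕ → Set α, IsTrace lam H T → (∃ i, i < lam ∧ H i ≠ T i) →
    ¬ MHTModels lam τ H T Γ

/-- Propositional formulas over atoms `β`. -/
inductive PF (β : Type) : Type
  | fls
  | atom (a : β)
  | and (φ ψ : PF β)
  | or (φ ψ : PF β)
  | imp (φ ψ : PF β)

def PF.neg {β : Type} (φ : PF β) : PF β := .imp φ .fls
def PF.top {β : Type} : PF β := PF.neg .fls

def bigOr {β : Type} (l : List (PF β)) : PF β := l.foldr .or .fls
def bigAnd {β : Type} (l : List (PF β)) : PF β := l.foldr .and PF.top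

/-- Here-and-there satisfaction. -/
def HSat {β : Type} : Set β → Set β → PF β → Prop
  | _, _, .fls => False
  | H, _, .atom a => a ∈ H
  | H, T, .and φ ψ => HSat H T φ ∧ HSat H T ψ
  | H, T, .or φ ψ => HSat H T φ ∨ HSat H T ψ
  | H, T, .imp φ ψ => (HSat H T φ → HSat H T ψ) ∧ (HSat T T φ → HSat T T ψ)

def HTModels {β : Type} (H T : Set β) (Γ : Set (PF β)) : Prop :=
  ∀ φ ∈ Γ, HSat H T φ

/-- `T` (as the total interpretation `⟨T,T⟩`) is an equilibrium model of `Γ`. -/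
def EqModel {β : Type} (T : Set β) (Γ : Set (PF β)) : Prop :=
  HTModels T T Γ ∧ ∀ H : Set β, H ⊂ T → ¬ HTModels H T Γ

/-- Literals over atoms `β`. -/
inductive Lit (β : Type) : Type
  | pos (a : β)
  | neg (a : β)

/-- Body atoms: atoms of the alphabet, `𝗜`, or `𝗙`. -/
inductive BAt (α : Type) : Type
  | atm (a : α)
  | init
  | fin

/-- A plain metric rule: `□(α ← β)` or `□(◯_I a ← β)`. -/
inductive PlainRule (α : Type) : Type
  | basic (head : List (Lit α)) (body : List (Lit (BAt α)))
  | nxt (I : Interval) (a : α) (body : List (Lit (BAt α)))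

def litMF {α β : Type} (f : β → MF α) : Lit β → MF α
  | .pos a => f a
  | .neg a => MF.neg (f a)

def BAt.mf {α : Type} : BAt α → MF α
  | .atm a => .atom a
  | .init => .init
  | .fin => MF.fin

def headMF {α : Type} (l : List (Lit α)) : MF α :=
  (l.map (litMF MF.atom)).foldr .disj .fls

def bodyMF {α : Type} (l : List (Lit (BAt α))) : MF α :=
  (l.map (litMF BAt.mf)).foldr .conj MF.top

/-- The metric formula corresponding to a plain metric rule. -/
def PlainRule.mf {α : Type} : PlainRule α → MF α
  | .basic h b => .always fullInterval (.impl (bodyMF b) (headMF h))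
  | .nxt I a b => .always fullInterval (.impl (bodyMF b) (.next I (.atom a)))

/-- Atoms of the translated propositional language: `a_k` and `t_{k,d}`. -/
inductive XA (α : Type) : Type
  | av (a : α) (k : ℕ)
  | tv (k d : ℕ)

def sigLit {β γ : Type} (f : β → PF γ) : Lit β → PF γ
  | .pos a => f a
  | .neg a => PF.neg (f a)

def sigBAt {α : Type} (lam k : ℕ) : BAt α → PF (XA α)
  | .atm a => .atom (.av a k)
  | .init => if k = 0 then PF.top else .fls
  | .fin => if k = lam - 1 then PF.top else .fls

def sigBody {α : Type} (lam k : ℕ) (b : List (Lit (BAt α))) : PF (XA α) :=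
  (b.map (sigLit (sigBAt lam k))).foldr .and PF.top

def sigHead {α : Type} (k : ℕ) (h : List (Lit α)) : PF (XA α) :=
  (h.map (sigLit (fun a => PF.atom (XA.av a k)))).foldr .or .fls

/-- The translation `σ_k` of a plain metric rule. -/
def sigRule {α : Type} (lam k : ℕ) : PlainRule α → PF (XA α)
  | .basic h b => .imp (sigBody lam k b) (sigHead k h)
  | .nxt _ a b => .imp (sigBody lam k b)
      (if k = lam - 1 then .fls else .atom (.av a (k + 1)))

/-- `Π_λ(P)`. -/
def PiTheory {α : Type} (lam : ℕ) (P : Set (PlainRule α)) : Set (PF (XA α)) :=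
  {φ | ∃ r ∈ P, ∃ k, k < lam ∧ φ = sigRule lam k r}

/-- `Δ_{λ,ν}`. -/
def deltaTheory (α : Type) (lam ν : ℕ) : Set (PF (XA α)) :=
  insert (PF.atom (XA.tv 0 0))
    {φ | ∃ k d, k + 1 < lam ∧ d ≤ ν ∧
      φ = PF.imp (.atom (.tv k d))
        (bigOr (((List.range (ν + 1)).filter (fun d' => decide (d < d'))).map
          (fun d' => PF.atom (XA.tv (k + 1) d'))))}

/-- `Ψ_{λ,ν}(P)`. -/
def psiTheory {α : Type} (lam ν : ℕ) (P : Set (PlainRule α)) : Set (PF (XA α)) :=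
  {φ | ∃ I a b, PlainRule.nxt I a b ∈ P ∧ ∃ k d d', k + 1 < lam ∧ d < d' ∧ d' ≤ ν ∧
    (d' - d < I.m ∨ ∃ nn, I.n = some nn ∧ nn ≤ d' - d) ∧
    φ = PF.imp (.and (sigBody lam k b) (.and (.atom (.tv k d)) (.atom (.tv (k + 1) d')))) .fls}

/-- The `a_k`-part of `θ(M)` for one component of the trace. -/
def thetaAv {α : Type} (lam : ℕ) (S : ℕ → Set α) : Set (XA α) :=
  {x | ∃ a k, k < lam ∧ a ∈ S k ∧ x = XA.av a k}

/-- The `t_{k,d}`-part `X` of `θ(M)`. -/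
def thetaX (α : Type) (lam : ℕ) (τ : ℕ → ℕ) : Set (XA α) :=
  {x | ∃ k, k < lam ∧ x = XA.tv k (τ k)}

/-- One component of `θ(M)`: atoms from the trace component plus `X`. -/
def thetaHT {α : Type} (lam : ℕ) (τ : ℕ → ℕ) (S : ℕ → Set α) : Set (XA α) :=
  thetaAv lam S ∪ thetaX α lam τ

/-- `⟨H,T⟩` is timed wrt `lam`, with induced timing function `τ`. -/
def TimedHT {α : Type} (lam : ℕ) (H T : Set (XA α)) (τ : ℕ → ℕ) : Prop :=
  IsTiming lam τ ∧
  ∀ k, k < lam → ∀ d, ((XA.tv k d ∈ H) ↔ τ k = d) ∧ ((XA.tv k d ∈ T) ↔ τ k = d)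


/-! ### Auxiliary lemmas -/

lemma hsat_top {β : Type} (H T : Set β) : HSat H T PF.top := by
  simp [PF.top, PF.neg, HSat]

lemma msat_top {α : Type} (lam : ℕ) (τ : ℕ → ℕ) (H T : ℕ → Set α) (k : ℕ) :
    MSat lam τ H T k MF.top := by
  simp [MF.top, MF.neg, MSat]

lemma full_mem (x : ℕ) : fullInterval.mem x :=
  ⟨Nat.zero_le _, by simp [fullInterval]⟩

lemma msat_fin {α : Type} (lam : ℕ) (τ : ℕ → ℕ) (H T : ℕ → Set α) (k : ℕ)
    (hk : k < lam) : MSat lam τ H T k MF.fin ↔ k = lam - 1 := by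
  simp only [MF.fin, MF.neg, MSat]
  constructor
  · rintro ⟨h1, _⟩
    by_contra hne
    exact h1 ⟨by omega, by simp [MF.top, MF.neg, MSat], full_mem _⟩
  · rintro h
    exact ⟨fun hc => absurd hc.1 (by omega), fun hc => absurd hc.1 (by omega)⟩

lemma hsat_bigOr {β : Type} (H T : Set β) (l : List (PF β)) :
    HSat H T (bigOr l) ↔ ∃ φ ∈ l, HSat H T φ := by
  induction l with
  | nil => simp [bigOr, HSat]
  | cons a t ih => simp only [bigOr, List.foldr] at ih ⊢; simp [HSat, ih]

lemma persistence {β : Type} {H T : Set β} (hs : H ⊆ T) :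
    ∀ φ : PF β, HSat H T φ → HSat T T φ := by
  intro φ
  induction φ with
  | fls => exact id
  | atom a => exact fun h => hs h
  | and φ ψ ihφ ihψ => exact fun h => ⟨ihφ h.1, ihψ h.2⟩
  | or φ ψ ihφ ihψ => exact fun h => h.elim (fun h => Or.inl (ihφ h)) (fun h => Or.inr (ihψ h))
  | imp φ ψ _ _ => exact fun h => ⟨h.2, h.2⟩

lemma timing_mono {lam : ℕ} {τ : ℕ → ℕ} (h : IsTiming lam τ) :
    ∀ {i j : ℕ}, i ≤ j → j < lam → τ i ≤ τ j := by
  intro i j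
  induction j with
  | zero => intro hij _; have : i = 0 := by omega
            rw [this]
  | succ n ih =>
      intro hij hlt
      rcases Nat.eq_or_lt_of_le hij with h1 | h1
      · rw [h1]
      · exact le_trans (ih (by omega) (by omega)) (le_of_lt (h.2 n hlt))

lemma mem_theta_av {α : Type} (lam : ℕ) (τ : ℕ → ℕ) (T : ℕ → Set α) (a : α) (k : ℕ) :
    XA.av a k ∈ thetaHT lam τ T ↔ (k < lam ∧ a ∈ T k) := by
  constructor
  · rintro (⟨a', k', hk', ha', h⟩ | ⟨k', _, h⟩) <;> cases h
    exact ⟨hk', ha'⟩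
  · rintro ⟨hk, ha⟩; exact Or.inl ⟨a, k, hk, ha, rfl⟩

lemma mem_theta_tv {α : Type} (lam : ℕ) (τ : ℕ → ℕ) (T : ℕ → Set α) (k d : ℕ) :
    XA.tv k d ∈ thetaHT lam τ T ↔ (k < lam ∧ τ k = d) := by
  constructor
  · rintro (⟨a', k', _, _, h⟩ | ⟨k', hk', h⟩) <;> cases h
    exact ⟨hk', rfl⟩
  · rintro ⟨hk, hd⟩; exact Or.inr ⟨k, hk, by rw [hd]⟩

/-- Correspondence between a trace level and a propositional interpretation. -/
structure Corr {α : Type} (lam : ℕ) (Hs T : ℕ → Set α)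
    (Hset Tset : Set (XA α)) : Prop where
  hH : ∀ a k, k < lam → (a ∈ Hs k ↔ XA.av a k ∈ Hset)
  hT : ∀ a k, k < lam → (a ∈ T k ↔ XA.av a k ∈ Tset)

section Equiv

variable {α : Type} {lam : ℕ} {τ : ℕ → ℕ} {Hs T : ℕ → Set α} {Hset Tset : Set (XA α)}

lemma bat_pos (C : Corr lam Hs T Hset Tset) {k : ℕ} (hk : k < lam) (b : BAt α) :
    MSat lam τ Hs T k b.mf ↔ HSat Hset Tset (sigBAt lam k b) := by
  cases b with
  | atm a => simpa [BAt.mf, sigBAt, MSat, HSat] using C.hH a k hk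
  | init =>
      by_cases h : k = 0 <;>
        simp [BAt.mf, sigBAt, MSat, HSat, h, hsat_top]
  | fin =>
      rw [show BAt.mf BAt.fin = (MF.fin : MF α) from rfl, msat_fin lam τ Hs T k hk]
      by_cases h : k = lam - 1 <;> simp [sigBAt, h, hsat_top, HSat]

lemma lit_bat (CH : Corr lam Hs T Hset Tset) (CT : Corr lam T T Tset Tset)
    {k : ℕ} (hk : k < lam) (l : Lit (BAt α)) :
    MSat lam τ Hs T k (litMF BAt.mf l) ↔ HSat Hset Tset (sigLit (sigBAt lam k) l) := by
  cases l with
  | pos b => exact bat_pos CH hk b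
  | neg b =>
      have h1 := bat_pos (τ := τ) CH hk b
      have h2 := bat_pos (τ := τ) CT hk b
      simp only [litMF, sigLit, MF.neg, PF.neg, MSat, HSat, h1, h2]

lemma body_equiv (CH : Corr lam Hs T Hset Tset) (CT : Corr lam T T Tset Tset)
    {k : ℕ} (hk : k < lam) (b : List (Lit (BAt α))) :
    MSat lam τ Hs T k (bodyMF b) ↔ HSat Hset Tset (sigBody lam k b) := by
  induction b with
  | nil => simp [bodyMF, sigBody, msat_top, hsat_top]
  | cons l t ih =>
      simp only [bodyMF, sigBody, List.map_cons, List.foldr_cons] at ih ⊢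
      rw [show MSat lam τ Hs T k (MF.conj (litMF BAt.mf l)
        ((t.map (litMF BAt.mf)).foldr MF.conj MF.top)) ↔ _ from Iff.rfl]
      simp only [MSat, HSat, ih, lit_bat CH CT hk l]

lemma lit_atom (CH : Corr lam Hs T Hset Tset) (CT : Corr lam T T Tset Tset)
    {k : ℕ} (hk : k < lam) (l : Lit α) :
    MSat lam τ Hs T k (litMF MF.atom l) ↔
      HSat Hset Tset (sigLit (fun a => PF.atom (XA.av a k)) l) := by
  cases l with
  | pos a => simpa [litMF, sigLit, MSat, HSat] using CH.hH a k hk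
  | neg a =>
      have h1 := CH.hH a k hk
      have h2 := CT.hH a k hk
      simp only [litMF, sigLit, MF.neg, PF.neg, MSat, HSat]
      rw [h1, CT.hT a k hk]

lemma head_equiv (CH : Corr lam Hs T Hset Tset) (CT : Corr lam T T Tset Tset)
    {k : ℕ} (hk : k < lam) (h : List (Lit α)) :
    MSat lam τ Hs T k (headMF h) ↔ HSat Hset Tset (sigHead k h) := by
  induction h with
  | nil => simp [headMF, sigHead, MSat, HSat]
  | cons l t ih =>
      simp only [headMF, sigHead, List.map_cons, List.foldr_cons] at ih ⊢
      simp only [MSat, HSat, ih, lit_atom CH CT hk l]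

end Equiv

theorem stmt0 {α : Type} (lam : ℕ) (hlam : 1 ≤ lam)
    (τ : ℕ → ℕ) (hτ : IsTiming lam τ)
    (T : ℕ → Set α) (P : Set (PlainRule α))
    (hM : MetricEqModel lam τ T (PlainRule.mf '' P)) :
    EqModel (thetaHT lam τ T)
      (PiTheory lam P ∪ deltaTheory α lam (τ (lam - 1)) ∪
        psiTheory lam (τ (lam - 1)) P) := by
  classical
  have CT : Corr lam T T (thetaHT lam τ T) (thetaHT lam τ T) := by
    refine ⟨?_, ?_⟩ <;>
      exact fun a k hk => by
        rw [mem_theta_av]; exact ⟨fun h => ⟨hk, h⟩, fun h => h.2⟩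
  have hX : ∀ k, k < lam → XA.tv k (τ k) ∈ thetaHT lam τ T :=
    fun k hk => (mem_theta_tv lam τ T k (τ k)).mpr ⟨hk, rfl⟩
  -- Part 1: the total interpretation is an HT-model of the translation.
  have hTot : HTModels (thetaHT lam τ T) (thetaHT lam τ T)
      (PiTheory lam P ∪ deltaTheory α lam (τ (lam - 1)) ∪
        psiTheory lam (τ (lam - 1)) P) := by
    rintro φ ((hφ | hφ) | hφ)
    · -- Π
      obtain ⟨r, hr, k, hk, rfl⟩ := hφ
      have hr' := hM.1 r.mf ⟨r, hr, rfl⟩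
      cases r with
      | basic hd b =>
          simp only [PlainRule.mf, MSat] at hr'
          have key : HSat (thetaHT lam τ T) (thetaHT lam τ T) (sigBody lam k b) →
              HSat (thetaHT lam τ T) (thetaHT lam τ T) (sigHead k hd) := by
            intro hb
            have hb' := (body_equiv (τ := τ) CT CT hk b).mpr hb
            exact (head_equiv (τ := τ) CT CT hk hd).mp
              ((hr' k (Nat.zero_le _) hk (full_mem _)).1 hb')
          exact ⟨key, key⟩
      | nxt I a b =>
          simp only [PlainRule.mf, MSat] at hr'
          have key : HSat (thetaHT lam τ T) (thetaHT lam τ T) (sigBody lam k b) →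
              HSat (thetaHT lam τ T) (thetaHT lam τ T)
                (if k = lam - 1 then PF.fls else PF.atom (XA.av a (k + 1))) := by
            intro hb
            have hb' := (body_equiv (τ := τ) CT CT hk b).mpr hb
            obtain ⟨h1, h2, _⟩ := (hr' k (Nat.zero_le _) hk (full_mem _)).1 hb'
            rw [if_neg (by omega : ¬ k = lam - 1)]
            exact (mem_theta_av lam τ T a (k + 1)).mpr ⟨h1, h2⟩
          exact ⟨key, key⟩
    · -- Δ
      simp only [deltaTheory, Set.mem_insert_iff, Set.mem_setOf_eq] at hφ
      rcases hφ with rfl | ⟨k, d, hk1, hd, rfl⟩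
      · exact (mem_theta_tv lam τ T 0 0).mpr ⟨by omega, hτ.1⟩
      · have key : HSat (thetaHT lam τ T) (thetaHT lam τ T) (PF.atom (XA.tv k d)) →
            HSat (thetaHT lam τ T) (thetaHT lam τ T)
              (bigOr ((List.filter (fun d' => decide (d < d'))
                (List.range (τ (lam - 1) + 1))).map
                  (fun d' => PF.atom (XA.tv (k + 1) d')))) := by
          intro ht
          obtain ⟨hklam, hτk⟩ := (mem_theta_tv lam τ T k d).mp ht
          rw [hsat_bigOr]
          refine ⟨PF.atom (XA.tv (k + 1) (τ (k + 1))), ?_, ?_⟩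
          · rw [List.mem_map]
            refine ⟨τ (k + 1), ?_, rfl⟩
            rw [List.mem_filter, List.mem_range]
            have h1 : τ (k + 1) ≤ τ (lam - 1) :=
              timing_mono hτ (by omega) (by omega)
            have h2 : d < τ (k + 1) := by
              rw [← hτk]; exact hτ.2 k hk1
            exact ⟨by omega, by simpa using h2⟩
          · exact (mem_theta_tv lam τ T (k + 1) (τ (k + 1))).mpr ⟨hk1, rfl⟩
        exact ⟨key, key⟩
    · -- Ψ
      obtain ⟨I, a, b, hrule, k, d, d', hk1, hdd', hd'ν, hbad, rfl⟩ := hφ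
      have key : HSat (thetaHT lam τ T) (thetaHT lam τ T)
          (PF.and (sigBody lam k b)
            (PF.and (PF.atom (XA.tv k d)) (PF.atom (XA.tv (k + 1) d')))) → False := by
        rintro ⟨hb, htk, htk1⟩
        obtain ⟨_, hτk⟩ := (mem_theta_tv lam τ T k d).mp htk
        obtain ⟨_, hτk1⟩ := (mem_theta_tv lam τ T (k + 1) d').mp htk1
        have hb' := (body_equiv (τ := τ) CT CT (by omega : k < lam) b).mpr hb
        have hr' := hM.1 (PlainRule.mf (.nxt I a b)) ⟨_, hrule, rfl⟩
        simp only [PlainRule.mf, MSat] at hr'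
        obtain ⟨_, _, hmem⟩ :=
          (hr' k (Nat.zero_le _) (by omega) (full_mem _)).1 hb'
        rw [hτk, hτk1] at hmem
        rcases hbad with hbad | ⟨nn, hnn, hle⟩
        · exact absurd hmem.1 (by omega)
        · have := hmem.2 nn (by simp [hnn])
          omega
      exact ⟨key, key⟩
  refine ⟨hTot, ?_⟩
  -- Part 2: minimality.
  intro H hsub hmod
  have hsubset : H ⊆ thetaHT lam τ T := hsub.subset
  -- the timing atoms are all in H
  have hXH : ∀ k, k < lam → XA.tv k (τ k) ∈ H := by
    intro k
    induction k with
    | zero =>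
        intro _
        have h0 : (PF.atom (XA.tv 0 0) : PF (XA α)) ∈
            PiTheory lam P ∪ deltaTheory α lam (τ (lam - 1)) ∪
              psiTheory lam (τ (lam - 1)) P :=
          Or.inl (Or.inr (Set.mem_insert _ _))
        have := hmod _ h0
        rw [hτ.1]
        exact this
    | succ k ih =>
        intro hk1
        have htk : XA.tv k (τ k) ∈ H := ih (by omega)
        have hδ : (PF.imp (.atom (.tv k (τ k)))
            (bigOr (((List.range (τ (lam - 1) + 1)).filter
              (fun d' => decide (τ k < d'))).map
                (fun d' => PF.atom (XA.tv (k + 1) d')))) : PF (XA α)) ∈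
            PiTheory lam P ∪ deltaTheory α lam (τ (lam - 1)) ∪
              psiTheory lam (τ (lam - 1)) P := by
          refine Or.inl (Or.inr (Set.mem_insert_of_mem _ ?_))
          exact ⟨k, τ k, hk1, timing_mono hτ (by omega) (by omega), rfl⟩
        have hOr := (hmod _ hδ).1 htk
        rw [hsat_bigOr] at hOr
        obtain ⟨ψ, hψmem, hψ⟩ := hOr
        rw [List.mem_map] at hψmem
        obtain ⟨d', _, rfl⟩ := hψmem
        have hd' : τ (k + 1) = d' :=
          ((mem_theta_tv lam τ T (k + 1) d').mp (hsubset hψ)).2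
        rw [hd']
        exact hψ
  -- the induced trace
  set Hs : ℕ → Set α := fun k => {a | XA.av a k ∈ H} with hHs
  have CH : Corr lam Hs T H (thetaHT lam τ T) :=
    ⟨fun a k _ => Iff.rfl, CT.hT⟩
  have hTrace : IsTrace lam Hs T :=
    fun i hi a ha => ((mem_theta_av lam τ T a i).mp (hsubset ha)).2
  have hDiff : ∃ i, i < lam ∧ Hs i ≠ T i := by
    obtain ⟨x, hxT, hxH⟩ := Set.exists_of_ssubset hsub
    cases x with
    | tv k d =>
        obtain ⟨hk, hτk⟩ := (mem_theta_tv lam τ T k d).mp hxT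
        exact absurd (hτk ▸ hXH k hk) hxH
    | av a k =>
        obtain ⟨hk, ha⟩ := (mem_theta_av lam τ T a k).mp hxT
        refine ⟨k, hk, fun heq => hxH ?_⟩
        have : a ∈ Hs k := heq ▸ ha
        exact this
  -- core implication for "next" rules
  have hcore : ∀ (Hs' : ℕ → Set α) (Hset : Set (XA α)),
      Corr lam Hs' T Hset (thetaHT lam τ T) →
      (∀ k, k < lam → XA.tv k (τ k) ∈ Hset) →
      (∀ ψ ∈ PiTheory lam P ∪ deltaTheory α lam (τ (lam - 1)) ∪
          psiTheory lam (τ (lam - 1)) P, HSat Hset (thetaHT lam τ T) ψ) →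
      ∀ (I : Interval) (a : α) (b : List (Lit (BAt α))),
        PlainRule.nxt I a b ∈ P → ∀ i, i < lam →
        MSat lam τ Hs' T i (bodyMF b) →
        MSat lam τ Hs' T i (.next I (.atom a)) := by
    intro Hs' Hset C hX' hmods I a b hrule i hi hb
    have hbσ := (body_equiv (τ := τ) C CT hi b).mp hb
    have hPi := hmods (sigRule lam i (.nxt I a b))
      (Or.inl (Or.inl ⟨_, hrule, i, hi, rfl⟩))
    simp only [sigRule] at hPi
    by_cases hie : i = lam - 1
    · rw [if_pos hie] at hPi
      exact (hPi.1 hbσ).elim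
    · rw [if_neg hie] at hPi
      have hi1 : i + 1 < lam := by omega
      have ha' : XA.av a (i + 1) ∈ Hset := hPi.1 hbσ
      have hImem : I.mem (τ (i + 1) - τ i) := by
        by_contra hImem
        have hbad : (τ (i + 1) - τ i < I.m ∨
            ∃ nn, I.n = some nn ∧ nn ≤ τ (i + 1) - τ i) := by
          by_cases hm : τ (i + 1) - τ i < I.m
          · exact Or.inl hm
          · rw [Interval.mem] at hImem
            push_neg at hImem
            obtain ⟨nn, hnn, hle⟩ := hImem (by omega)
            exact Or.inr ⟨nn, Option.mem_def.mp hnn, hle⟩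
        have hPsi := hmods (PF.imp (.and (sigBody lam i b)
            (.and (.atom (.tv i (τ i))) (.atom (.tv (i + 1) (τ (i + 1)))))) .fls)
          (Or.inr ⟨I, a, b, hrule, i, τ i, τ (i + 1), hi1, hτ.2 i hi1,
            timing_mono hτ (by omega) (by omega), hbad, rfl⟩)
        exact hPsi.1 ⟨hbσ, hX' i (by omega), hX' (i + 1) hi1⟩
      exact ⟨hi1, (C.hH a (i + 1) hi1).mpr ha', hImem⟩
  -- the induced trace is an MHT-model of P
  have hMHT : MHTModels lam τ Hs T (PlainRule.mf '' P) := by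
    rintro φ ⟨r, hr, rfl⟩
    cases r with
    | basic hd b =>
        simp only [PlainRule.mf, MSat]
        intro i _ hi _
        have hPi := hmod (sigRule lam i (.basic hd b))
          (Or.inl (Or.inl ⟨_, hr, i, hi, rfl⟩))
        simp only [sigRule] at hPi
        constructor
        · intro hb
          exact (head_equiv (τ := τ) CH CT hi hd).mpr
            (hPi.1 ((body_equiv (τ := τ) CH CT hi b).mp hb))
        · intro hb
          exact (head_equiv (τ := τ) CT CT hi hd).mpr
            (hPi.2 ((body_equiv (τ := τ) CT CT hi b).mp hb))
    | nxt I a b =>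
        simp only [PlainRule.mf, MSat]
        intro i _ hi _
        constructor
        · exact hcore Hs H CH hXH hmod I a b hr i hi
        · exact hcore T (thetaHT lam τ T) CT hX hTot I a b hr i hi
  exact hM.2 Hs hTrace hDiff hMHT

end MetricASP
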